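/- Let y and z be {0,1}-valued random variables and x a random vector such that z is conditionally independent of x given y. Let ρ₀ = P(z=1 | y=0) and ρ₁ = P(z=0 | y=1). Then E[z | x] = (1 - ρ₁ - ρ₀) · E[y | x] + ρ₀. -/

import Mathlib

open MeasureTheory

lemma indic_setIntegral {Ω : Type*} [MeasurableSpace Ω] (μ : Measure Ω)
    (w : Ω → ℝ) (hw : Measurable w) (hw01 : ∀ ω, w ω = 0 ∨ w ω = 1) (s : Set Ω) :
    ∫ ω in s, w ω ∂μ = (μ (s ∩ {ω | w ω = 1})).toReal := by
  have hms : MeasurableSet {ω | w ω = 1} := hw (measurableSet_singleton 1)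
  have heq : ∫ ω in s, w ω ∂μ = ∫ ω in s, Set.indicator {ω | w ω = 1} (fun _ => (1:ℝ)) ω ∂μ := by
    refine integral_congr_ae (ae_of_all _ fun ω => ?_)
    rcases hw01 ω with h | h <;> simp [Set.indicator, h]
  rw [heq, setIntegral_indicator hms, setIntegral_const, measureReal_def, smul_eq_mul, mul_one]

lemma bdd01_integrable {Ω : Type*} [MeasurableSpace Ω] (μ : Measure Ω) [IsProbabilityMeasure μ]
    (w : Ω → ℝ) (hw : Measurable w) (hw01 : ∀ ω, w ω = 0 ∨ w ω = 1) :
    Integrable w μ := by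
  refine Integrable.mono' (integrable_const 1) hw.aestronglyMeasurable ?_
  refine ae_of_all _ fun ω => ?_
  rcases hw01 ω with h | h <;> simp [h]

lemma condY_eq {Ω : Type*} [MeasurableSpace Ω]
    (μ : Measure Ω) [IsProbabilityMeasure μ]
    (y z : Ω → ℝ) (hy : Measurable y) (hz : Measurable z)
    (hy01 : ∀ ω, y ω = 0 ∨ y ω = 1) (hz01 : ∀ ω, z ω = 0 ∨ z ω = 1)
    (hy0 : μ {ω | y ω = 0} ≠ 0) (hy1 : μ {ω | y ω = 1} ≠ 0)
    (ρ₀ ρ₁ : ℝ)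
    (hρ₀ : ρ₀ = (μ ({ω | z ω = 1} ∩ {ω | y ω = 0})).toReal / (μ {ω | y ω = 0}).toReal)
    (hρ₁ : ρ₁ = (μ ({ω | z ω = 0} ∩ {ω | y ω = 1})).toReal / (μ {ω | y ω = 1}).toReal) :
    (fun ω => (1 - ρ₁ - ρ₀) * y ω + ρ₀)
      =ᵐ[μ] μ[z | MeasurableSpace.comap y inferInstance] := by
  have hmY_le : MeasurableSpace.comap y inferInstance ≤ ‹MeasurableSpace Ω› := hy.comap_le
  have hmA0 : MeasurableSet {ω | y ω = 0} := hy (measurableSet_singleton 0)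
  have hmA1 : MeasurableSet {ω | y ω = 1} := hy (measurableSet_singleton 1)
  have hZint : Integrable z μ := bdd01_integrable μ z hz hz01
  have hYint : Integrable y μ := bdd01_integrable μ y hy hy01
  have hGint : Integrable (fun ω => (1 - ρ₁ - ρ₀) * y ω + ρ₀) μ :=
    (hYint.const_mul _).add (integrable_const _)
  have hA0r : (μ {ω | y ω = 0}).toReal ≠ 0 := ENNReal.toReal_ne_zero.2 ⟨hy0, measure_ne_top μ _⟩
  have hA1r : (μ {ω | y ω = 1}).toReal ≠ 0 := ENNReal.toReal_ne_zero.2 ⟨hy1, measure_ne_top μ _⟩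
  have hintA0 : ∫ ω in {ω | y ω = 0}, z ω ∂μ
      = ∫ ω in {ω | y ω = 0}, ((1 - ρ₁ - ρ₀) * y ω + ρ₀) ∂μ := by
    rw [indic_setIntegral μ z hz hz01]
    rw [setIntegral_congr_fun hmA0 (g := fun _ => ρ₀) (fun ω hω => by
      rw [show y ω = 0 from hω]; ring)]
    rw [setIntegral_const, measureReal_def, smul_eq_mul, hρ₀, Set.inter_comm]
    field_simp
  have hintA1 : ∫ ω in {ω | y ω = 1}, z ω ∂μ
      = ∫ ω in {ω | y ω = 1}, ((1 - ρ₁ - ρ₀) * y ω + ρ₀) ∂μ := by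
    rw [indic_setIntegral μ z hz hz01]
    rw [setIntegral_congr_fun hmA1 (g := fun _ => 1 - ρ₁) (fun ω hω => by
      rw [show y ω = 1 from hω]; ring)]
    rw [setIntegral_const, measureReal_def, smul_eq_mul]
    have hsplit : μ ({ω | z ω = 1} ∩ {ω | y ω = 1}) + μ ({ω | z ω = 0} ∩ {ω | y ω = 1})
        = μ {ω | y ω = 1} := by
      rw [← measure_union]
      · congr 1
        ext ω
        rcases hz01 ω with h | h <;> simp [h]
      · refine Set.disjoint_left.2 fun ω h1 h0 => ?_
        have h1' := h1.1; have h0' := h0.1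
        simp only [Set.mem_setOf_eq] at h1' h0'
        rw [h1'] at h0'; norm_num at h0'
      · exact (hz (measurableSet_singleton 0)).inter hmA1
    have hsplit' : (μ ({ω | z ω = 1} ∩ {ω | y ω = 1})).toReal
        + (μ ({ω | z ω = 0} ∩ {ω | y ω = 1})).toReal = (μ {ω | y ω = 1}).toReal := by
      rw [← ENNReal.toReal_add (measure_ne_top _ _) (measure_ne_top _ _), hsplit]
    rw [Set.inter_comm, hρ₁]
    field_simp
    linarith [hsplit']
  refine ae_eq_condExp_of_forall_setIntegral_eq hmY_le hZint
    (fun s _ _ => hGint.integrableOn) ?_ ?_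
  · rintro s ⟨t, ht, rfl⟩ -
    by_cases h0 : (0:ℝ) ∈ t <;> by_cases h1 : (1:ℝ) ∈ t
    · have hs : y ⁻¹' t = Set.univ := by
        ext ω; rcases hy01 ω with h | h <;> simp [h, h0, h1]
      have huniv : (Set.univ : Set Ω) = {ω | y ω = 0} ∪ {ω | y ω = 1} := by
        ext ω; rcases hy01 ω with h | h <;> simp [h]
      have hdisj : Disjoint {ω | y ω = 0} {ω | y ω = 1} :=
        Set.disjoint_left.2 fun ω ha hb => by
          simp only [Set.mem_setOf_eq] at ha hb; rw [ha] at hb; norm_num at hb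
      rw [hs, huniv, setIntegral_union hdisj hmA1 hGint.integrableOn hGint.integrableOn,
        setIntegral_union hdisj hmA1 hZint.integrableOn hZint.integrableOn,
        hintA0, hintA1]
    · have hs : y ⁻¹' t = {ω | y ω = 0} := by
        ext ω; rcases hy01 ω with h | h <;> simp [h, h0, h1]
      rw [hs, hintA0]
    · have hs : y ⁻¹' t = {ω | y ω = 1} := by
        ext ω; rcases hy01 ω with h | h <;> simp [h, h0, h1]
      rw [hs, hintA1]
    · have hs : y ⁻¹' t = ∅ := by
        ext ω; rcases hy01 ω with h | h <;> simp [h, h0, h1]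
      rw [hs]; simp
  · have hym : Measurable[MeasurableSpace.comap y inferInstance] y :=
      Measurable.of_comap_le le_rfl
    exact ((measurable_const.mul hym).add measurable_const).aestronglyMeasurable

/-- Let `y, z` be `{0,1}`-valued random variables and `x` a random vector such
that `z` is conditionally independent of `x` given `y` (i.e. `E[z | σ(x,y)] = E[z | σ(y)]`
a.s.).  With `ρ₀ = P(z=1 | y=0)` and `ρ₁ = P(z=0 | y=1)`, we have
`E[z | x] = (1 - ρ₁ - ρ₀)·E[y | x] + ρ₀` a.s. -/
theorem stmt0 {Ω E : Type*} [MeasurableSpace Ω] [MeasurableSpace E]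
    (μ : Measure Ω) [IsProbabilityMeasure μ]
    (x : Ω → E) (y z : Ω → ℝ)
    (hx : Measurable x) (hy : Measurable y) (hz : Measurable z)
    (hy01 : ∀ ω, y ω = 0 ∨ y ω = 1) (hz01 : ∀ ω, z ω = 0 ∨ z ω = 1)
    (hy0 : μ {ω | y ω = 0} ≠ 0) (hy1 : μ {ω | y ω = 1} ≠ 0)
    (hCI : μ[z | MeasurableSpace.comap (fun ω => (x ω, y ω)) inferInstance]
      =ᵐ[μ] μ[z | MeasurableSpace.comap y inferInstance])
    (ρ₀ ρ₁ : ℝ)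
    (hρ₀ : ρ₀ = (μ ({ω | z ω = 1} ∩ {ω | y ω = 0})).toReal / (μ {ω | y ω = 0}).toReal)
    (hρ₁ : ρ₁ = (μ ({ω | z ω = 0} ∩ {ω | y ω = 1})).toReal / (μ {ω | y ω = 1}).toReal) :
    μ[z | MeasurableSpace.comap x inferInstance]
      =ᵐ[μ] fun ω => (1 - ρ₁ - ρ₀) * (μ[y | MeasurableSpace.comap x inferInstance]) ω + ρ₀ := by
  have hmX_le : MeasurableSpace.comap x inferInstance ≤ ‹MeasurableSpace Ω› := hx.comap_le
  have hmXY_le : MeasurableSpace.comap (fun ω => (x ω, y ω)) inferInstance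
      ≤ ‹MeasurableSpace Ω› := (hx.prodMk hy).comap_le
  have hX_le_XY : MeasurableSpace.comap x inferInstance
      ≤ MeasurableSpace.comap (fun ω => (x ω, y ω)) inferInstance := by
    have : x = Prod.fst ∘ (fun ω => (x ω, y ω)) := rfl
    rw [this, ← MeasurableSpace.comap_comp]
    exact MeasurableSpace.comap_mono measurable_fst.comap_le
  have hYint : Integrable y μ := bdd01_integrable μ y hy hy01
  have hcondY := condY_eq μ y z hy hz hy01 hz01 hy0 hy1 ρ₀ ρ₁ hρ₀ hρ₁
  have h1 : μ[z | MeasurableSpace.comap x inferInstance]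
      =ᵐ[μ] μ[μ[z | MeasurableSpace.comap (fun ω => (x ω, y ω)) inferInstance]
        | MeasurableSpace.comap x inferInstance] :=
    (condExp_condExp_of_le hX_le_XY hmXY_le).symm
  have h2 := condExp_congr_ae (m := MeasurableSpace.comap x inferInstance) (μ := μ) hCI
  have h3 := condExp_congr_ae (m := MeasurableSpace.comap x inferInstance) (μ := μ) hcondY.symm
  have h4 : μ[fun ω => (1 - ρ₁ - ρ₀) * y ω + ρ₀ | MeasurableSpace.comap x inferInstance]
      =ᵐ[μ] fun ω => (1 - ρ₁ - ρ₀) * (μ[y | MeasurableSpace.comap x inferInstance]) ω + ρ₀ := by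
    have hgsum : (fun ω => (1 - ρ₁ - ρ₀) * y ω + ρ₀)
        = (fun ω => (1 - ρ₁ - ρ₀) * y ω) + (fun _ => ρ₀) := rfl
    rw [hgsum]
    refine (condExp_add (hYint.const_mul _) (integrable_const _) _).trans ?_
    have hsmul : μ[fun ω => (1 - ρ₁ - ρ₀) * y ω | MeasurableSpace.comap x inferInstance]
        =ᵐ[μ] fun ω => (1 - ρ₁ - ρ₀) * (μ[y | MeasurableSpace.comap x inferInstance]) ω := by
      have := condExp_smul (μ := μ) (m := MeasurableSpace.comap x inferInstance)
        (1 - ρ₁ - ρ₀ : ℝ) y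
      exact this
    filter_upwards [hsmul] with ω hω
    simp only [Pi.add_apply, hω, condExp_const hmX_le]
  exact ((h1.trans h2).trans h3).trans h4
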